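/- MIOs with synchronous composition, weak modal refinement, and weak modal compatibility form an interface theory: weakly compatible MIOs are composable; weak modal refinement is preserved by synchronous composition; and weak modal compatibility is preserved by weak modal refinement. -/

import Mathlib

/-- A modal I/O-transition system (MIO): states, an initial state, a signature of
input, output and internal actions (pairwise disjoint subsets of the action
universe `A`), may-transitions and must-transitions with must ⊆ may. -/
structure MIO (A : Type) where
  State : Type
  start : State
  inp : Set A
  out : Set A
  intl : Set A
  may : State → A → State → Prop
  must : State → A → State → Prop
  inp_out : ∀ a, a ∈ inp → a ∈ out → False
  inp_intl : ∀ a, a ∈ inp → a ∈ intl → False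
  out_intl : ∀ a, a ∈ out → a ∈ intl → False
  must_sub : ∀ s a s', must s a s' → may s a s'

namespace MIO

variable {A B : Type}

/-- The set of all actions of a MIO. -/
def act (S : MIO A) : Set A := S.inp ∪ S.out ∪ S.intl

/-- Two MIOs have the same signature. -/
def SigEq (S T : MIO A) : Prop := S.inp = T.inp ∧ S.out = T.out ∧ S.intl = T.intl

/-- Strong modal refinement `S ≤_m T`. -/
def StrongRefines (S T : MIO A) : Prop :=
  SigEq S T ∧
  ∃ R : S.State → T.State → Prop, R S.start T.start ∧
    ∀ s t, R s t →
      (∀ a t', T.must t a t' → ∃ s', S.must s a s' ∧ R s' t') ∧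
      (∀ a s', S.may s a s' → ∃ t', T.may t a t' ∧ R s' t')

/-- One internal must-transition. -/
def tauMust (S : MIO A) (s s' : S.State) : Prop := ∃ a ∈ S.intl, S.must s a s'

/-- Finitely many (possibly zero) internal must-transitions. -/
def tauMustStar (S : MIO A) : S.State → S.State → Prop := Relation.ReflTransGen S.tauMust

/-- One internal may-transition. -/
def tauMay (S : MIO A) (s s' : S.State) : Prop := ∃ a ∈ S.intl, S.may s a s'

/-- Finitely many (possibly zero) internal may-transitions. -/
def tauMayStar (S : MIO A) : S.State → S.State → Prop := Relation.ReflTransGen S.tauMay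

/-- Weak modal refinement `S ≤_m* T`. -/
def WeakRefines (S T : MIO A) : Prop :=
  SigEq S T ∧
  ∃ R : S.State → T.State → Prop, R S.start T.start ∧
    ∀ s t, R s t →
      (∀ a ∈ T.inp ∪ T.out, ∀ t', T.must t a t' →
        ∃ s1 s2 s', S.tauMustStar s s1 ∧ S.must s1 a s2 ∧ S.tauMustStar s2 s' ∧ R s' t') ∧
      (∀ a ∈ T.intl, ∀ t', T.must t a t' → ∃ s', S.tauMustStar s s' ∧ R s' t') ∧
      (∀ a ∈ S.inp ∪ S.out, ∀ s', S.may s a s' →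
        ∃ t1 t2 t', T.tauMayStar t t1 ∧ T.may t1 a t2 ∧ T.tauMayStar t2 t' ∧ R s' t') ∧
      (∀ a ∈ S.intl, ∀ s', S.may s a s' → ∃ t', T.tauMayStar t t' ∧ R s' t')

/-- Shared actions of two MIOs. -/
def shared (S T : MIO A) : Set A := S.act ∩ T.act

/-- Two MIOs are (syntactically) composable if their actions overlap only on
complementary types. -/
def Composable (S T : MIO A) : Prop :=
  shared S T ⊆ (S.inp ∩ T.out) ∪ (T.inp ∩ S.out)

/-- Synchronous composition `S ⊗_sy T` of composable MIOs. -/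
def syncComp (S T : MIO A) (_h : Composable S T) : MIO A where
  State := S.State × T.State
  start := (S.start, T.start)
  inp := (S.inp ∪ T.inp) \ shared S T
  out := (S.out ∪ T.out) \ shared S T
  intl := S.intl ∪ T.intl ∪ shared S T
  may p a p' :=
    (a ∈ shared S T ∧ S.may p.1 a p'.1 ∧ T.may p.2 a p'.2) ∨
    (a ∈ S.act ∧ a ∉ shared S T ∧ S.may p.1 a p'.1 ∧ p'.2 = p.2) ∨
    (a ∈ T.act ∧ a ∉ shared S T ∧ T.may p.2 a p'.2 ∧ p'.1 = p.1)
  must p a p' :=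
    (a ∈ shared S T ∧ S.must p.1 a p'.1 ∧ T.must p.2 a p'.2) ∨
    (a ∈ S.act ∧ a ∉ shared S T ∧ S.must p.1 a p'.1 ∧ p'.2 = p.2) ∨
    (a ∈ T.act ∧ a ∉ shared S T ∧ T.must p.2 a p'.2 ∧ p'.1 = p.1)
  inp_out := by
    intro a ha hb
    have h1 := S.inp_out a; have h2 := T.inp_out a
    simp only [Set.mem_diff, Set.mem_union, shared, act, Set.mem_inter_iff] at ha hb
    tauto
  inp_intl := by
    intro a ha hb
    have h1 := S.inp_intl a; have h2 := T.inp_intl a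
    simp only [Set.mem_diff, Set.mem_union, shared, act, Set.mem_inter_iff] at ha hb
    tauto
  out_intl := by
    intro a ha hb
    have h1 := S.out_intl a; have h2 := T.out_intl a
    simp only [Set.mem_diff, Set.mem_union, shared, act, Set.mem_inter_iff] at ha hb
    tauto
  must_sub := by
    rintro p a p' (⟨h1, h2, h3⟩ | ⟨h1, h2, h3, h4⟩ | ⟨h1, h2, h3, h4⟩)
    · exact Or.inl ⟨h1, S.must_sub _ _ _ h2, T.must_sub _ _ _ h3⟩
    · exact Or.inr (Or.inl ⟨h1, h2, S.must_sub _ _ _ h3, h4⟩)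
    · exact Or.inr (Or.inr ⟨h1, h2, T.must_sub _ _ _ h3, h4⟩)

/-- Reachability (w.r.t. may-transitions) from the initial state. -/
def Reachable (M : MIO A) (s : M.State) : Prop :=
  Relation.ReflTransGen (fun x y => ∃ a, M.may x a y) M.start s

/-- Strong modal compatibility `S ⇄_sc T`. -/
def StrongCompat (S T : MIO A) : Prop :=
  ∃ h : Composable S T,
    ∀ p : S.State × T.State, (syncComp S T h).Reachable p →
      (∀ a ∈ S.out ∩ T.inp, ∀ s', S.may p.1 a s' → ∃ t', T.must p.2 a t') ∧
      (∀ a ∈ T.out ∩ S.inp, ∀ t', T.may p.2 a t' → ∃ s', S.must p.1 a s')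

/-- Weak modal compatibility `S ⇄_wc T`. -/
def WeakCompat (S T : MIO A) : Prop :=
  ∃ h : Composable S T,
    ∀ p : S.State × T.State, (syncComp S T h).Reachable p →
      (∀ a ∈ S.out ∩ T.inp, ∀ s', S.may p.1 a s' →
        ∃ t1 t', T.tauMustStar p.2 t1 ∧ T.must t1 a t') ∧
      (∀ a ∈ T.out ∩ S.inp, ∀ t', T.may p.2 a t' →
        ∃ s1 s', S.tauMustStar p.1 s1 ∧ S.must s1 a s')

/-- Finite executions: `Trace M s as s'` means `M` can go from `s` to `s'` by
a sequence of may-transitions labelled by the list of actions `as`. -/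
inductive Trace (M : MIO A) : M.State → List A → M.State → Prop
  | nil (s : M.State) : Trace M s [] s
  | cons {s s' s'' : M.State} {a : A} {as : List A} :
      M.may s a s' → Trace M s' as s'' → Trace M s (a :: as) s''

/-- Renaming the actions of a MIO along an injective function. -/
def rename (f : A → B) (hf : Function.Injective f) (S : MIO A) : MIO B where
  State := S.State
  start := S.start
  inp := f '' S.inp
  out := f '' S.out
  intl := f '' S.intl
  may s b s' := ∃ a, b = f a ∧ S.may s a s'
  must s b s' := ∃ a, b = f a ∧ S.must s a s'
  inp_out := by
    rintro b ⟨a1, h1, rfl⟩ ⟨a2, h2, heq⟩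
    obtain rfl := hf heq
    exact S.inp_out a2 h1 h2
  inp_intl := by
    rintro b ⟨a1, h1, rfl⟩ ⟨a2, h2, heq⟩
    obtain rfl := hf heq
    exact S.inp_intl a2 h1 h2
  out_intl := by
    rintro b ⟨a1, h1, rfl⟩ ⟨a2, h2, heq⟩
    obtain rfl := hf heq
    exact S.out_intl a2 h1 h2
  must_sub := by
    rintro s b s' ⟨a, rfl, h⟩
    exact ⟨a, rfl, S.must_sub _ _ _ h⟩

-- Tagging function: actions in `o` become the fresh "queue input" actions `n^▷`
-- (encoded as `Sum.inr n`), all other actions are kept (as `Sum.inl a`).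
open Classical in
noncomputable def tagged (o : Set A) : A → A ⊕ A :=
  fun a => if a ∈ o then Sum.inr a else Sum.inl a

theorem tagged_injective (o : Set A) : Function.Injective (tagged o) := by
  classical
  intro a b h
  by_cases ha : a ∈ o <;> by_cases hb : b ∈ o <;>
    simp [tagged, ha, hb] at h <;> tauto

/-- The queue MIO `Q_o`: a FIFO buffer for messages in `o`. States are finite
strings over `A` (with reachable states being strings over `o`), inputs are the
tagged actions `n^▷ = Sum.inr n`, outputs the actions `n = Sum.inl n` for `n ∈ o`.
Enqueue at the front, dequeue from the back; may- and must-transitions coincide. -/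
def queueMIO (o : Set A) : MIO (A ⊕ A) where
  State := List A
  start := []
  inp := Sum.inr '' o
  out := Sum.inl '' o
  intl := ∅
  may s b s' :=
    (∃ n ∈ o, b = Sum.inr n ∧ s' = n :: s) ∨ (∃ n ∈ o, b = Sum.inl n ∧ s = s' ++ [n])
  must s b s' :=
    (∃ n ∈ o, b = Sum.inr n ∧ s' = n :: s) ∨ (∃ n ∈ o, b = Sum.inl n ∧ s = s' ++ [n])
  inp_out := by rintro b ⟨n, hn, rfl⟩ ⟨m, hm, h⟩; simp at h
  inp_intl := by rintro b _ h; simp at h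
  out_intl := by rintro b _ h; simp at h
  must_sub := fun _ _ _ h => h

theorem omega_composable (o : Set A) (S : MIO A) (ho : o ⊆ S.out) :
    Composable (rename (tagged o) (tagged_injective o) S) (queueMIO o) := by
  classical
  rintro b ⟨hb1, hb2⟩
  have hq : (∃ n ∈ o, Sum.inr n = b) ∨ (∃ n ∈ o, Sum.inl n = b) := by
    simpa [queueMIO, act, Set.image, Set.mem_union] using hb2
  have hr : ∃ a, ((a ∈ S.inp ∨ a ∈ S.out) ∨ a ∈ S.intl) ∧ tagged o a = b := by
    simpa [rename, act, ← Set.image_union] using hb1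
  obtain ⟨a, _, ha⟩ := hr
  rcases hq with ⟨n, hn, hb⟩ | ⟨n, hn, hb⟩
  · right
    constructor
    · exact ⟨n, hn, hb⟩
    · refine ⟨n, ho hn, ?_⟩
      rw [← hb]; simp [tagged, hn]
  · exfalso
    rw [← hb] at ha
    by_cases h : a ∈ o
    · simp [tagged, h] at ha
    · simp [tagged, h] at ha
      exact h (ha ▸ hn)

/-- `Ω_o(S)`: the MIO `S` with an output queue for `o ⊆ out_S`, i.e. the
synchronous product of the renamed MIO `S_o^▷` with the queue MIO `Q_o`. -/
noncomputable def Omega (o : Set A) (S : MIO A) (ho : o ⊆ S.out) : MIO (A ⊕ A) :=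
  syncComp (rename (tagged o) (tagged_injective o) S) (queueMIO o) (omega_composable o S ho)

/-- The outputs of `S` that are inputs of `T`. -/
def oOf (S T : MIO A) : Set A := S.out ∩ T.inp

/-- `Ω_{o_S}(S)` where `o_S = out_S ∩ in_T`. -/
noncomputable def OmegaC (S T : MIO A) : MIO (A ⊕ A) :=
  Omega (oOf S T) S Set.inter_subset_left

/-- Composability of the queue-extended MIOs, i.e. definedness of `S ⊗_as T`. -/
def AsyncComposable (S T : MIO A) : Prop := Composable (OmegaC S T) (OmegaC T S)

/-- Asynchronous composition `S ⊗_as T = Ω_{o_S}(S) ⊗_sy Ω_{o_T}(T)`. -/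
noncomputable def asyncComp (S T : MIO A) (h : AsyncComposable S T) : MIO (A ⊕ A) :=
  syncComp (OmegaC S T) (OmegaC T S) h

/-- Asynchronous modal compatibility `S ⇄_ac T`. -/
def AsyncCompat (S T : MIO A) : Prop :=
  Composable S T ∧ WeakCompat (OmegaC S T) (OmegaC T S)

/-! ### Auxiliary lemmas -/

theorem mem_act_inp {S : MIO A} {a} (h : a ∈ S.inp) : a ∈ S.act := Or.inl (Or.inl h)
theorem mem_act_out {S : MIO A} {a} (h : a ∈ S.out) : a ∈ S.act := Or.inl (Or.inr h)
theorem mem_act_intl {S : MIO A} {a} (h : a ∈ S.intl) : a ∈ S.act := Or.inr h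

theorem intl_not_shared_left {S T : MIO A} (h : Composable S T) {a}
    (ha : a ∈ S.intl) : a ∉ shared S T := fun hsh => by
  rcases h hsh with ⟨h1, _⟩ | ⟨_, h2⟩
  · exact S.inp_intl a h1 ha
  · exact S.out_intl a h2 ha

theorem intl_not_shared_right {S T : MIO A} (h : Composable S T) {a}
    (ha : a ∈ T.intl) : a ∉ shared S T := fun hsh => by
  rcases h hsh with ⟨_, h2⟩ | ⟨h1, _⟩
  · exact T.out_intl a h2 ha
  · exact T.inp_intl a h1 ha

theorem shared_mem_left {S T : MIO A} (h : Composable S T) {a}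
    (ha : a ∈ shared S T) : a ∈ S.inp ∪ S.out := by
  rcases h ha with ⟨h1, _⟩ | ⟨_, h2⟩
  · exact Or.inl h1
  · exact Or.inr h2

theorem shared_mem_right {S T : MIO A} (h : Composable S T) {a}
    (ha : a ∈ shared S T) : a ∈ T.inp ∪ T.out := by
  rcases h ha with ⟨_, h2⟩ | ⟨h1, _⟩
  · exact Or.inr h2
  · exact Or.inl h1

/-- If `a ∈ S.act`, `a ∉ shared S T` and `a` is an input or output of one of
the components, then `a ∈ S.inp ∪ S.out`. -/
theorem act_io_left {S T : MIO A} {a}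
    (haS : a ∈ S.act) (hns : a ∉ shared S T)
    (hio : a ∈ S.inp ∪ T.inp ∨ a ∈ S.out ∪ T.out) : a ∈ S.inp ∪ S.out := by
  rcases haS with hio' | hintl
  · exact hio'
  · exfalso
    rcases hio with (hi | hi) | (ho | ho)
    · exact S.inp_intl a hi hintl
    · exact hns ⟨Or.inr hintl, Or.inl (Or.inl hi)⟩
    · exact S.out_intl a ho hintl
    · exact hns ⟨Or.inr hintl, Or.inl (Or.inr ho)⟩

theorem act_io_right {S T : MIO A} {a}
    (haT : a ∈ T.act) (hns : a ∉ shared S T)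
    (hio : a ∈ S.inp ∪ T.inp ∨ a ∈ S.out ∪ T.out) : a ∈ T.inp ∪ T.out := by
  rcases haT with hio' | hintl
  · exact hio'
  · exfalso
    rcases hio with (hi | hi) | (ho | ho)
    · exact hns ⟨Or.inl (Or.inl hi), Or.inr hintl⟩
    · exact T.inp_intl a hi hintl
    · exact hns ⟨Or.inl (Or.inr ho), Or.inr hintl⟩
    · exact T.out_intl a ho hintl

/-! ### Lifting transitions to the synchronous product -/

section Lift
variable {S T : MIO A} (h : Composable S T)

theorem lift_must_left {a} {s s' : S.State} {t : T.State}
    (haS : a ∈ S.act) (hns : a ∉ shared S T) (hm : S.must s a s') :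
    (syncComp S T h).must (s, t) a (s', t) :=
  Or.inr (Or.inl ⟨haS, hns, hm, rfl⟩)

theorem lift_must_right {a} {t t' : T.State} {s : S.State}
    (haT : a ∈ T.act) (hns : a ∉ shared S T) (hm : T.must t a t') :
    (syncComp S T h).must (s, t) a (s, t') :=
  Or.inr (Or.inr ⟨haT, hns, hm, rfl⟩)

theorem lift_may_left {a} {s s' : S.State} {t : T.State}
    (haS : a ∈ S.act) (hns : a ∉ shared S T) (hm : S.may s a s') :
    (syncComp S T h).may (s, t) a (s', t) :=
  Or.inr (Or.inl ⟨haS, hns, hm, rfl⟩)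

theorem lift_may_right {a} {t t' : T.State} {s : S.State}
    (haT : a ∈ T.act) (hns : a ∉ shared S T) (hm : T.may t a t') :
    (syncComp S T h).may (s, t) a (s, t') :=
  Or.inr (Or.inr ⟨haT, hns, hm, rfl⟩)

theorem lift_must_sync {a} {s s' : S.State} {t t' : T.State}
    (hsh : a ∈ shared S T) (hmS : S.must s a s') (hmT : T.must t a t') :
    (syncComp S T h).must (s, t) a (s', t') := Or.inl ⟨hsh, hmS, hmT⟩

theorem lift_may_sync {a} {s s' : S.State} {t t' : T.State}
    (hsh : a ∈ shared S T) (hmS : S.may s a s') (hmT : T.may t a t') :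
    (syncComp S T h).may (s, t) a (s', t') := Or.inl ⟨hsh, hmS, hmT⟩

theorem lift_tauMustStar_left {s s' : S.State} (t : T.State)
    (hm : S.tauMustStar s s') :
    (syncComp S T h).tauMustStar (s, t) (s', t) := by
  induction hm with
  | refl => exact Relation.ReflTransGen.refl
  | tail _ step ih =>
    obtain ⟨a, ha, hm⟩ := step
    exact ih.tail ⟨a, Or.inl (Or.inl ha),
      lift_must_left h (mem_act_intl ha) (intl_not_shared_left h ha) hm⟩

theorem lift_tauMustStar_right {t t' : T.State} (s : S.State)
    (hm : T.tauMustStar t t') :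
    (syncComp S T h).tauMustStar (s, t) (s, t') := by
  induction hm with
  | refl => exact Relation.ReflTransGen.refl
  | tail _ step ih =>
    obtain ⟨a, ha, hm⟩ := step
    exact ih.tail ⟨a, Or.inl (Or.inr ha),
      lift_must_right h (mem_act_intl ha) (intl_not_shared_right h ha) hm⟩

theorem lift_tauMayStar_left {s s' : S.State} (t : T.State)
    (hm : S.tauMayStar s s') :
    (syncComp S T h).tauMayStar (s, t) (s', t) := by
  induction hm with
  | refl => exact Relation.ReflTransGen.refl
  | tail _ step ih =>
    obtain ⟨a, ha, hm⟩ := step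
    exact ih.tail ⟨a, Or.inl (Or.inl ha),
      lift_may_left h (mem_act_intl ha) (intl_not_shared_left h ha) hm⟩

theorem lift_tauMayStar_right {t t' : T.State} (s : S.State)
    (hm : T.tauMayStar t t') :
    (syncComp S T h).tauMayStar (s, t) (s, t') := by
  induction hm with
  | refl => exact Relation.ReflTransGen.refl
  | tail _ step ih =>
    obtain ⟨a, ha, hm⟩ := step
    exact ih.tail ⟨a, Or.inl (Or.inr ha),
      lift_may_right h (mem_act_intl ha) (intl_not_shared_right h ha) hm⟩

end Lift

theorem Reachable.tau {M : MIO A} {q q' : M.State}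
    (h1 : M.Reachable q) (h2 : M.tauMayStar q q') : M.Reachable q' :=
  h1.trans (Relation.ReflTransGen.mono (fun _ _ hstep => ⟨hstep.choose, hstep.choose_spec.2⟩) _ _ h2)

theorem SigEq.act_eq {S T : MIO A} (h : SigEq S T) : S.act = T.act := by
  obtain ⟨h1, h2, h3⟩ := h; simp only [act, h1, h2, h3]

theorem shared_eq {S S' T T' : MIO A} (hS : SigEq S' S) (hT : SigEq T' T) :
    shared S' T' = shared S T := by
  simp only [shared, hS.act_eq, hT.act_eq]

theorem Composable.of_sigEq {S S' T T' : MIO A} (h : Composable S T)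
    (hS : SigEq S' S) (hT : SigEq T' T) : Composable S' T' := by
  unfold Composable
  rw [shared_eq hS hT, hS.1, hS.2.1, hT.1, hT.2.1]
  exact h

/-- Pull back a sequence of internal must-transitions along a weak refinement. -/
theorem pull_tauMustStar {T' T : MIO A} (RT : T'.State → T.State → Prop)
    (hyp : ∀ t' t, RT t' t → ∀ a ∈ T.intl, ∀ u, T.must t a u →
      ∃ u', T'.tauMustStar t' u' ∧ RT u' u)
    {t t1 : T.State} {t' : T'.State} (hs : T.tauMustStar t t1) (hr : RT t' t) :
    ∃ t1', T'.tauMustStar t' t1' ∧ RT t1' t1 := by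
  induction hs with
  | refl => exact ⟨t', Relation.ReflTransGen.refl, hr⟩
  | tail _ step ih =>
    obtain ⟨u', hu, hru⟩ := ih
    obtain ⟨a, ha, hm⟩ := step
    obtain ⟨v, hv, hrv⟩ := hyp _ _ hru a ha _ hm
    exact ⟨v, hu.trans hv, hrv⟩

/-- Weak modal refinement is preserved by synchronous composition. -/
theorem weakRefines_syncComp {S S' T T' : MIO A} (h : Composable S T)
    (h' : Composable S' T') (hS : WeakRefines S' S) (hT : WeakRefines T' T) :
    WeakRefines (syncComp S' T' h') (syncComp S T h) := by
  obtain ⟨sigS, RS, hRS0, hRS⟩ := hS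
  obtain ⟨sigT, RT, hRT0, hRT⟩ := hT
  have hshared : shared S' T' = shared S T := shared_eq sigS sigT
  refine ⟨⟨?_, ?_, ?_⟩, fun p q => RS p.1 q.1 ∧ RT p.2 q.2, ⟨hRS0, hRT0⟩, ?_⟩
  · show (S'.inp ∪ T'.inp) \ shared S' T' = (S.inp ∪ T.inp) \ shared S T
    rw [hshared, sigS.1, sigT.1]
  · show (S'.out ∪ T'.out) \ shared S' T' = (S.out ∪ T.out) \ shared S T
    rw [hshared, sigS.2.1, sigT.2.1]
  · show S'.intl ∪ T'.intl ∪ shared S' T' = S.intl ∪ T.intl ∪ shared S T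
    rw [hshared, sigS.2.2, sigT.2.2]
  rintro ⟨s', t'⟩ ⟨s, t⟩ ⟨hrs, hrt⟩
  obtain ⟨hS1, hS2, hS3, hS4⟩ := hRS _ _ hrs
  obtain ⟨hT1, hT2, hT3, hT4⟩ := hRT _ _ hrt
  refine ⟨?_, ?_, ?_, ?_⟩
  · -- non-internal musts of S ⊗ T
    rintro a ha ⟨s1, t1⟩ hmust
    have hns : a ∉ shared S T := by
      rcases ha with ⟨_, hns⟩ | ⟨_, hns⟩ <;> exact hns
    have hio : a ∈ S.inp ∪ T.inp ∨ a ∈ S.out ∪ T.out := by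
      rcases ha with ⟨hm, _⟩ | ⟨hm, _⟩
      · exact Or.inl hm
      · exact Or.inr hm
    rcases hmust with ⟨hsh, _, _⟩ | ⟨haS, _, hm, heq⟩ | ⟨haT, _, hm, heq⟩
    · exact absurd hsh hns
    · have haIO : a ∈ S.inp ∪ S.out := act_io_left haS hns hio
      obtain ⟨u1, u2, u3, hst1, hst2, hst3, hr⟩ := hS1 a haIO _ hm
      have hns' : a ∉ shared S' T' := hshared ▸ hns
      have haS' : a ∈ S'.act := sigS.act_eq ▸ haS
      refine ⟨(u1, t'), (u2, t'), (u3, t'),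
        lift_tauMustStar_left h' t' hst1,
        lift_must_left h' haS' hns' hst2,
        lift_tauMustStar_left h' t' hst3, hr, ?_⟩
      exact heq ▸ hrt
    · have haIO : a ∈ T.inp ∪ T.out := act_io_right haT hns hio
      obtain ⟨u1, u2, u3, hst1, hst2, hst3, hr⟩ := hT1 a haIO _ hm
      have hns' : a ∉ shared S' T' := hshared ▸ hns
      have haT' : a ∈ T'.act := sigT.act_eq ▸ haT
      refine ⟨(s', u1), (s', u2), (s', u3),
        lift_tauMustStar_right h' s' hst1,
        lift_must_right h' haT' hns' hst2,
        lift_tauMustStar_right h' s' hst3, ?_, hr⟩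
      exact heq ▸ hrs
  · -- internal musts of S ⊗ T
    rintro a ha ⟨s1, t1⟩ hmust
    rcases hmust with ⟨hsh, hmS, hmT⟩ | ⟨haS, hns, hm, heq⟩ | ⟨haT, hns, hm, heq⟩
    · obtain ⟨u1, u2, u3, hst1, hst2, hst3, hrS⟩ :=
        hS1 a (shared_mem_left h hsh) _ hmS
      obtain ⟨v1, v2, v3, htt1, htt2, htt3, hrT⟩ :=
        hT1 a (shared_mem_right h hsh) _ hmT
      have hsh' : a ∈ shared S' T' := hshared ▸ hsh
      refine ⟨(u3, v3), ?_, hrS, hrT⟩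
      have step : (syncComp S' T' h').tauMust (u1, v1) (u2, v2) :=
        ⟨a, Or.inr hsh', lift_must_sync h' hsh' hst2 htt2⟩
      exact ((((lift_tauMustStar_left h' t' hst1).trans
        (lift_tauMustStar_right h' u1 htt1)).tail step).trans
        (lift_tauMustStar_left h' v2 hst3)).trans (lift_tauMustStar_right h' u3 htt3)
    · have haintl : a ∈ S.intl := by
        rcases ha with (hi | hi) | hi
        · exact hi
        · exact absurd ⟨haS, mem_act_intl hi⟩ hns
        · exact absurd hi hns
      obtain ⟨u, hu, hr⟩ := hS2 a haintl _ hm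
      exact ⟨(u, t'), lift_tauMustStar_left h' t' hu, hr, heq ▸ hrt⟩
    · have haintl : a ∈ T.intl := by
        rcases ha with (hi | hi) | hi
        · exact absurd ⟨mem_act_intl hi, haT⟩ hns
        · exact hi
        · exact absurd hi hns
      obtain ⟨u, hu, hr⟩ := hT2 a haintl _ hm
      exact ⟨(s', u), lift_tauMustStar_right h' s' hu, heq ▸ hrs, hr⟩
  · -- non-internal mays of S' ⊗ T'
    rintro a ha ⟨s1, t1⟩ hmay
    have hns' : a ∉ shared S' T' := by
      rcases ha with ⟨_, hns⟩ | ⟨_, hns⟩ <;> exact hns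
    have hns : a ∉ shared S T := hshared ▸ hns'
    have hio : a ∈ S'.inp ∪ T'.inp ∨ a ∈ S'.out ∪ T'.out := by
      rcases ha with ⟨hm, _⟩ | ⟨hm, _⟩
      · exact Or.inl hm
      · exact Or.inr hm
    rcases hmay with ⟨hsh, _, _⟩ | ⟨haS, _, hm, heq⟩ | ⟨haT, _, hm, heq⟩
    · exact absurd hsh hns'
    · have haIO : a ∈ S'.inp ∪ S'.out := act_io_left haS hns' hio
      obtain ⟨u1, u2, u3, hst1, hst2, hst3, hr⟩ := hS3 a haIO _ hm
      have haS0 : a ∈ S.act := sigS.act_eq ▸ haS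
      refine ⟨(u1, t), (u2, t), (u3, t),
        lift_tauMayStar_left h t hst1,
        lift_may_left h haS0 hns hst2,
        lift_tauMayStar_left h t hst3, hr, ?_⟩
      exact heq ▸ hrt
    · have haIO : a ∈ T'.inp ∪ T'.out := act_io_right haT hns' hio
      obtain ⟨u1, u2, u3, hst1, hst2, hst3, hr⟩ := hT3 a haIO _ hm
      have haT0 : a ∈ T.act := sigT.act_eq ▸ haT
      refine ⟨(s, u1), (s, u2), (s, u3),
        lift_tauMayStar_right h s hst1,
        lift_may_right h haT0 hns hst2,
        lift_tauMayStar_right h s hst3, ?_, hr⟩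
      exact heq ▸ hrs
  · -- internal mays of S' ⊗ T'
    rintro a ha ⟨s1, t1⟩ hmay
    rcases hmay with ⟨hsh, hmS, hmT⟩ | ⟨haS, hns, hm, heq⟩ | ⟨haT, hns, hm, heq⟩
    · obtain ⟨u1, u2, u3, hst1, hst2, hst3, hrS⟩ :=
        hS3 a (shared_mem_left h' hsh) _ hmS
      obtain ⟨v1, v2, v3, htt1, htt2, htt3, hrT⟩ :=
        hT3 a (shared_mem_right h' hsh) _ hmT
      have hsh0 : a ∈ shared S T := hshared ▸ hsh
      refine ⟨(u3, v3), ?_, hrS, hrT⟩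
      have step : (syncComp S T h).tauMay (u1, v1) (u2, v2) :=
        ⟨a, Or.inr hsh0, lift_may_sync h hsh0 hst2 htt2⟩
      exact ((((lift_tauMayStar_left h t hst1).trans
        (lift_tauMayStar_right h u1 htt1)).tail step).trans
        (lift_tauMayStar_left h v2 hst3)).trans (lift_tauMayStar_right h u3 htt3)
    · have haintl : a ∈ S'.intl := by
        rcases ha with (hi | hi) | hi
        · exact hi
        · exact absurd ⟨haS, mem_act_intl hi⟩ hns
        · exact absurd hi hns
      obtain ⟨u, hu, hr⟩ := hS4 a haintl _ hm
      exact ⟨(u, t), lift_tauMayStar_left h t hu, hr, heq ▸ hrt⟩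
    · have haintl : a ∈ T'.intl := by
        rcases ha with (hi | hi) | hi
        · exact absurd ⟨mem_act_intl hi, haT⟩ hns
        · exact hi
        · exact absurd hi hns
      obtain ⟨u, hu, hr⟩ := hT4 a haintl _ hm
      exact ⟨(s, u), lift_tauMayStar_right h s hu, heq ▸ hrs, hr⟩

/-- Weak modal compatibility is preserved by weak modal refinement. -/
theorem weakCompat_of_refines {S S' T T' : MIO A}
    (hc : WeakCompat S T) (hS : WeakRefines S' S) (hT : WeakRefines T' T) :
    WeakCompat S' T' := by
  obtain ⟨h, hcomp⟩ := hc
  obtain ⟨sigS, RS, hRS0, hRS⟩ := hS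
  obtain ⟨sigT, RT, hRT0, hRT⟩ := hT
  have h' : Composable S' T' := h.of_sigEq sigS sigT
  have hshared : shared S' T' = shared S T := shared_eq sigS sigT
  refine ⟨h', ?_⟩
  have inv : ∀ p : S'.State × T'.State, (syncComp S' T' h').Reachable p →
      ∃ q : S.State × T.State,
        (syncComp S T h).Reachable q ∧ RS p.1 q.1 ∧ RT p.2 q.2 := by
    intro p hp
    induction hp with
    | refl => exact ⟨(S.start, T.start), Relation.ReflTransGen.refl, hRS0, hRT0⟩
    | tail _ step ih =>
      obtain ⟨⟨s, t⟩, hq, hrs, hrt⟩ := ih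
      obtain ⟨a, hmay⟩ := step
      rcases hmay with ⟨hsh, hmS, hmT⟩ | ⟨haS, hns, hm, heq⟩ | ⟨haT, hns, hm, heq⟩
      · obtain ⟨u1, u2, u3, hst1, hst2, hst3, hrS⟩ :=
          (hRS _ _ hrs).2.2.1 a (shared_mem_left h' hsh) _ hmS
        obtain ⟨v1, v2, v3, htt1, htt2, htt3, hrT⟩ :=
          (hRT _ _ hrt).2.2.1 a (shared_mem_right h' hsh) _ hmT
        have hsh0 : a ∈ shared S T := hshared ▸ hsh
        refine ⟨(u3, v3), ?_, hrS, hrT⟩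
        exact Reachable.tau (Reachable.tau (Relation.ReflTransGen.tail
          (Reachable.tau (hq.tau (lift_tauMayStar_left h t hst1))
            (lift_tauMayStar_right h u1 htt1))
          ⟨a, lift_may_sync h hsh0 hst2 htt2⟩)
          (lift_tauMayStar_left h v2 hst3)) (lift_tauMayStar_right h u3 htt3)
      · have hns0 : a ∉ shared S T := hshared ▸ hns
        rcases haS with hio | hintl
        · obtain ⟨u1, u2, u3, hst1, hst2, hst3, hrS⟩ :=
            (hRS _ _ hrs).2.2.1 a hio _ hm
          have haS0 : a ∈ S.act := by
            rcases hio with hi | ho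
            · exact mem_act_inp (sigS.1 ▸ hi)
            · exact mem_act_out (sigS.2.1 ▸ ho)
          refine ⟨(u3, t), ?_, hrS, heq ▸ hrt⟩
          exact Reachable.tau (Relation.ReflTransGen.tail
            (hq.tau (lift_tauMayStar_left h t hst1))
            ⟨a, lift_may_left h haS0 hns0 hst2⟩)
            (lift_tauMayStar_left h t hst3)
        · obtain ⟨u, hu, hrS⟩ := (hRS _ _ hrs).2.2.2 a hintl _ hm
          exact ⟨(u, t), hq.tau (lift_tauMayStar_left h t hu), hrS, heq ▸ hrt⟩
      · have hns0 : a ∉ shared S T := hshared ▸ hns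
        rcases haT with hio | hintl
        · obtain ⟨u1, u2, u3, hst1, hst2, hst3, hrT⟩ :=
            (hRT _ _ hrt).2.2.1 a hio _ hm
          have haT0 : a ∈ T.act := by
            rcases hio with hi | ho
            · exact mem_act_inp (sigT.1 ▸ hi)
            · exact mem_act_out (sigT.2.1 ▸ ho)
          refine ⟨(s, u3), ?_, heq ▸ hrs, hrT⟩
          exact Reachable.tau (Relation.ReflTransGen.tail
            (hq.tau (lift_tauMayStar_right h s hst1))
            ⟨a, lift_may_right h haT0 hns0 hst2⟩)
            (lift_tauMayStar_right h s hst3)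
        · obtain ⟨u, hu, hrT⟩ := (hRT _ _ hrt).2.2.2 a hintl _ hm
          exact ⟨(s, u), hq.tau (lift_tauMayStar_right h s hu), heq ▸ hrs, hrT⟩
  intro p hp
  obtain ⟨⟨s, t⟩, hq, hrs, hrt⟩ := inv p hp
  constructor
  · rintro a ⟨haO, haI⟩ s1' hm
    obtain ⟨u1, u2, u3, hst1, hst2, _, _⟩ :=
      (hRS _ _ hrs).2.2.1 a (Or.inr haO) _ hm
    have hreach : (syncComp S T h).Reachable (u1, t) :=
      hq.tau (lift_tauMayStar_left h t hst1)
    obtain ⟨w1, w2, hw1, hw2⟩ :=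
      (hcomp (u1, t) hreach).1 a ⟨sigS.2.1 ▸ haO, sigT.1 ▸ haI⟩ u2 hst2
    obtain ⟨w1', hw1', hrw⟩ := pull_tauMustStar RT
      (fun t' t hr a ha u hmu => (hRT _ _ hr).2.1 a ha u hmu) hw1 hrt
    obtain ⟨v1, v2, _, hv1, hv2, _, _⟩ :=
      (hRT _ _ hrw).1 a (Or.inl (sigT.1 ▸ haI)) _ hw2
    exact ⟨v1, v2, hw1'.trans hv1, hv2⟩
  · rintro a ⟨haO, haI⟩ t1' hm
    obtain ⟨u1, u2, u3, hst1, hst2, _, _⟩ :=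
      (hRT _ _ hrt).2.2.1 a (Or.inr haO) _ hm
    have hreach : (syncComp S T h).Reachable (s, u1) :=
      hq.tau (lift_tauMayStar_right h s hst1)
    obtain ⟨w1, w2, hw1, hw2⟩ :=
      (hcomp (s, u1) hreach).2 a ⟨sigT.2.1 ▸ haO, sigS.1 ▸ haI⟩ u2 hst2
    obtain ⟨w1', hw1', hrw⟩ := pull_tauMustStar RS
      (fun s' s hr a ha u hmu => (hRS _ _ hr).2.1 a ha u hmu) hw1 hrs
    obtain ⟨v1, v2, _, hv1, hv2, _, _⟩ :=
      (hRS _ _ hrw).1 a (Or.inl (sigS.1 ▸ haI)) _ hw2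
    exact ⟨v1, v2, hw1'.trans hv1, hv2⟩

end MIO

open MIO

/-- MIOs with synchronous composition, weak modal refinement and weak modal
compatibility form an interface theory. -/
theorem weak_sync_interface_theory (A : Type) :
    (∀ S T : MIO A, WeakCompat S T → Composable S T) ∧
    (∀ (S S' T T' : MIO A) (h : Composable S T),
      WeakRefines S' S → WeakRefines T' T →
      Composable S' T' ∧
        ∀ h' : Composable S' T', WeakRefines (syncComp S' T' h') (syncComp S T h)) ∧
    (∀ S S' T T' : MIO A,
      WeakCompat S T → WeakRefines S' S → WeakRefines T' T →
      WeakCompat S' T') := by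
  refine ⟨fun S T hc => hc.choose, fun S S' T T' h hS hT => ?_,
    fun S S' T T' hc hS hT => weakCompat_of_refines hc hS hT⟩
  exact ⟨h.of_sigEq hS.1 hT.1, fun h' => weakRefines_syncComp h h' hS hT⟩
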